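/- Let m ≥ 1 and let Y be the m × m matrix whose (p, q) entry is 1/(p - q + 1)! for p - q + 1 ≥ 0 and 0 otherwise (so Y has entries 1 on the diagonal, 1 on the superdiagonal, and 1/(p-q+1)! below). Then det Y = 1/m!. -/

import Mathlib

open Finset

lemma auxA (n : ℕ) :
    ∑ j ∈ range (n+1), (-1:ℚ)^j / (Nat.factorial j * Nat.factorial (n-j))
      = if n = 0 then 1 else 0 := by
  have h := Int.alternating_sum_range_choose (n := n)
  have h' : ∑ j ∈ range (n+1), ((-1:ℚ))^j * (n.choose j : ℚ)
      = if n = 0 then 1 else 0 := by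
    have := congrArg (fun z : ℤ => (z : ℚ)) h
    push_cast at this
    simpa using this
  have hterm : ∀ j ∈ range (n+1),
      (-1:ℚ)^j / (Nat.factorial j * Nat.factorial (n-j))
        = ((-1:ℚ))^j * (n.choose j : ℚ) / (Nat.factorial n : ℚ) := by
    intro j hj
    have hjn : j ≤ n := by simpa [Nat.lt_succ_iff] using mem_range.mp hj
    have hfac : (n.choose j : ℚ) * (Nat.factorial j * Nat.factorial (n-j))
        = (Nat.factorial n : ℚ) := by
      have := Nat.choose_mul_factorial_mul_factorial hjn
      push_cast [← this]
      ring
    have h1 : (Nat.factorial j * Nat.factorial (n-j) : ℚ) ≠ 0 := by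
      positivity
    have h2 : (Nat.factorial n : ℚ) ≠ 0 := by positivity
    rw [div_eq_div_iff h1 h2, ← hfac]
    ring
  rw [Finset.sum_congr rfl hterm, ← Finset.sum_div, h']
  by_cases hn : n = 0 <;> simp [hn]

lemma key (p q : ℕ) :
    ∑ k ∈ range (p+1),
      (if q ≤ k + 1 then
        (-1:ℚ)^(p-k) / (Nat.factorial (p-k) * Nat.factorial (k+1-q)) else 0)
      = if q = 0 then (-1:ℚ)^p / (Nat.factorial (p+1))
        else if q = p+1 then 1 else 0 := by
  rcases Nat.eq_zero_or_pos q with hq0 | hqpos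
  · subst hq0
    -- all conditions true
    have : ∑ k ∈ range (p+1),
        (if (0:ℕ) ≤ k + 1 then
          (-1:ℚ)^(p-k) / (Nat.factorial (p-k) * Nat.factorial (k+1-0)) else 0)
        = ∑ k ∈ range (p+1),
          (-1:ℚ)^(p-k) / (Nat.factorial (p-k) * Nat.factorial (k+1)) := by
      refine Finset.sum_congr rfl fun k _ => ?_
      simp
    rw [this]
    have hrefl := Finset.sum_range_reflect
      (fun k => (-1:ℚ)^(p-k) / (Nat.factorial (p-k) * Nat.factorial (k+1))) (p+1)
    simp only [Nat.add_sub_cancel] at hrefl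
    have heq : ∑ j ∈ range (p+1),
        (-1:ℚ)^(p-(p-j)) / (Nat.factorial (p-(p-j)) * Nat.factorial ((p-j)+1))
        = ∑ j ∈ range (p+1), (-1:ℚ)^j / (Nat.factorial j * Nat.factorial (p+1-j)) := by
      refine Finset.sum_congr rfl fun j hj => ?_
      have hjp : j ≤ p := by simpa [Nat.lt_succ_iff] using mem_range.mp hj
      have h1 : p - (p - j) = j := by omega
      have h2 : (p - j) + 1 = p + 1 - j := by omega
      rw [h1, h2]
    rw [← hrefl, heq]
    have hA := auxA (p+1)
    rw [if_neg (Nat.succ_ne_zero p)] at hA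
    rw [Finset.sum_range_succ] at hA
    have hlast : (-1:ℚ)^(p+1) / (Nat.factorial (p+1) * Nat.factorial ((p+1)-(p+1)))
        = (-1:ℚ)^(p+1) / (Nat.factorial (p+1)) := by
      simp
    rw [hlast] at hA
    have : ∑ j ∈ range (p+1), (-1:ℚ)^j / (Nat.factorial j * Nat.factorial (p+1-j))
        = -((-1:ℚ)^(p+1) / (Nat.factorial (p+1))) := by linarith
    rw [this, if_pos rfl, pow_succ]
    ring
  · obtain ⟨q', rfl⟩ : ∃ q', q = q' + 1 := ⟨q - 1, by omega⟩
    by_cases hqp : q' ≤ p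
    · -- restrict to Ico q' (p+1)
      have hsplit : ∑ k ∈ range (p+1),
          (if q' + 1 ≤ k + 1 then
            (-1:ℚ)^(p-k) / (Nat.factorial (p-k) * Nat.factorial (k+1-(q'+1))) else 0)
          = ∑ k ∈ Ico q' (p+1),
            (-1:ℚ)^(p-k) / (Nat.factorial (p-k) * Nat.factorial (k-q')) := by
        rw [range_eq_Ico, ← Finset.sum_Ico_consecutive _ (Nat.zero_le q') (by omega)]
        have h1 : ∑ k ∈ Ico 0 q',
            (if q' + 1 ≤ k + 1 then
              (-1:ℚ)^(p-k) / (Nat.factorial (p-k) * Nat.factorial (k+1-(q'+1))) else 0) = 0 := by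
          refine Finset.sum_eq_zero fun k hk => ?_
          have := (Finset.mem_Ico.mp hk).2
          rw [if_neg (by omega)]
        have h2 : ∑ k ∈ Ico q' (p+1),
            (if q' + 1 ≤ k + 1 then
              (-1:ℚ)^(p-k) / (Nat.factorial (p-k) * Nat.factorial (k+1-(q'+1))) else 0)
            = ∑ k ∈ Ico q' (p+1),
              (-1:ℚ)^(p-k) / (Nat.factorial (p-k) * Nat.factorial (k-q')) := by
          refine Finset.sum_congr rfl fun k hk => ?_
          have := (Finset.mem_Ico.mp hk).1
          rw [if_pos (by omega)]
          have hkq : k + 1 - (q' + 1) = k - q' := by omega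
          rw [hkq]
        rw [h1, h2, zero_add]
      rw [hsplit, Finset.sum_Ico_eq_sum_range]
      set n := p - q' with hn
      have hpn : p + 1 - q' = n + 1 := by omega
      rw [hpn]
      have heq : ∑ j ∈ range (n+1),
          (-1:ℚ)^(p-(q'+j)) / (Nat.factorial (p-(q'+j)) * Nat.factorial ((q'+j)-q'))
          = ∑ j ∈ range (n+1), (-1:ℚ)^(n-j) / (Nat.factorial (n-j) * Nat.factorial j) := by
        refine Finset.sum_congr rfl fun j hj => ?_
        have h1 : p - (q' + j) = n - j := by omega
        have h2 : q' + j - q' = j := by omega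
        rw [h1, h2]
      rw [heq]
      have hrefl := Finset.sum_range_reflect
        (fun j => (-1:ℚ)^(n-j) / (Nat.factorial (n-j) * Nat.factorial j)) (n+1)
      simp only [Nat.add_sub_cancel] at hrefl
      have heq2 : ∑ j ∈ range (n+1),
          (-1:ℚ)^(n-(n-j)) / (Nat.factorial (n-(n-j)) * Nat.factorial (n-j))
          = ∑ j ∈ range (n+1), (-1:ℚ)^j / (Nat.factorial j * Nat.factorial (n-j)) := by
        refine Finset.sum_congr rfl fun j hj => ?_
        have hjn : j ≤ n := by simpa [Nat.lt_succ_iff] using mem_range.mp hj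
        have h1 : n - (n - j) = j := by omega
        rw [h1]
      rw [← hrefl, heq2, auxA n]
      have : (q' + 1 = p + 1) ↔ (n = 0) := by omega
      by_cases hn0 : n = 0
      · rw [if_pos hn0, if_neg (Nat.succ_ne_zero q'), if_pos (by omega)]
      · rw [if_neg hn0, if_neg (Nat.succ_ne_zero q'), if_neg (by omega)]
    · -- q' > p : everything zero
      have hz : ∑ k ∈ range (p+1),
          (if q' + 1 ≤ k + 1 then
            (-1:ℚ)^(p-k) / (Nat.factorial (p-k) * Nat.factorial (k+1-(q'+1))) else 0) = 0 := by
        refine Finset.sum_eq_zero fun k hk => ?_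
        have := mem_range.mp hk
        rw [if_neg (by omega)]
      rw [hz, if_neg (Nat.succ_ne_zero q'), if_neg (by omega)]

theorem det_factorial_matrix (m : ℕ) (hm : 1 ≤ m) :
    Matrix.det (fun p q : Fin m =>
      if (q : ℕ) ≤ (p : ℕ) + 1 then
        (1 : ℚ) / (Nat.factorial ((p : ℕ) + 1 - (q : ℕ)) : ℚ)
      else 0) = 1 / (Nat.factorial m : ℚ) := by
  obtain ⟨n, rfl⟩ : ∃ n, m = n + 1 := ⟨m - 1, by omega⟩
  set m := n + 1
  set Y : Matrix (Fin m) (Fin m) ℚ := fun p q =>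
    if (q : ℕ) ≤ (p : ℕ) + 1 then
      (1 : ℚ) / (Nat.factorial ((p : ℕ) + 1 - (q : ℕ)) : ℚ) else 0 with hY
  set B : Matrix (Fin m) (Fin m) ℚ := fun p q =>
    if (q : ℕ) ≤ (p : ℕ) then
      (-1:ℚ)^((p:ℕ)-(q:ℕ)) / (Nat.factorial ((p:ℕ)-(q:ℕ)) : ℚ) else 0 with hB
  set C : Matrix (Fin m) (Fin m) ℚ := fun p q =>
    if (q : ℕ) = 0 then (-1:ℚ)^(p:ℕ) / (Nat.factorial ((p:ℕ)+1) : ℚ)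
    else if (q:ℕ) = (p:ℕ)+1 then 1 else 0 with hC
  -- B * Y = C
  have hBY : B * Y = C := by
    ext p q
    rw [Matrix.mul_apply]
    have hfin : ∑ k : Fin m, B p k * Y k q
        = ∑ k ∈ range m, ((if k ≤ (p:ℕ) then
            (-1:ℚ)^((p:ℕ)-k) / (Nat.factorial ((p:ℕ)-k) : ℚ) else 0) *
          (if (q:ℕ) ≤ k + 1 then
            (1:ℚ) / (Nat.factorial (k+1-(q:ℕ)) : ℚ) else 0)) := by
      rw [← Fin.sum_univ_eq_sum_range]
    rw [hfin]
    have hsplit : ∑ k ∈ range m, ((if k ≤ (p:ℕ) then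
            (-1:ℚ)^((p:ℕ)-k) / (Nat.factorial ((p:ℕ)-k) : ℚ) else 0) *
          (if (q:ℕ) ≤ k + 1 then
            (1:ℚ) / (Nat.factorial (k+1-(q:ℕ)) : ℚ) else 0))
        = ∑ k ∈ range ((p:ℕ)+1), (if (q:ℕ) ≤ k + 1 then
            (-1:ℚ)^((p:ℕ)-k) / (Nat.factorial ((p:ℕ)-k) * Nat.factorial (k+1-(q:ℕ))) else 0) := by
      rw [range_eq_Ico, ← Finset.sum_Ico_consecutive _ (Nat.zero_le ((p:ℕ)+1))
        (by omega : (p:ℕ)+1 ≤ m)]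
      have h2 : ∑ k ∈ Ico ((p:ℕ)+1) m, ((if k ≤ (p:ℕ) then
            (-1:ℚ)^((p:ℕ)-k) / (Nat.factorial ((p:ℕ)-k) : ℚ) else 0) *
          (if (q:ℕ) ≤ k + 1 then
            (1:ℚ) / (Nat.factorial (k+1-(q:ℕ)) : ℚ) else 0)) = 0 := by
        refine Finset.sum_eq_zero fun k hk => ?_
        have := (Finset.mem_Ico.mp hk).1
        rw [if_neg (by omega), zero_mul]
      rw [h2, add_zero]
      rw [range_eq_Ico]
      refine Finset.sum_congr rfl fun k hk => ?_
      have hkp : k ≤ (p:ℕ) := by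
        have := Finset.mem_Ico.mp hk; omega
      rw [if_pos hkp]
      by_cases hq : (q:ℕ) ≤ k + 1
      · rw [if_pos hq, if_pos hq, div_mul_div_comm, mul_one]
      · rw [if_neg hq, if_neg hq, mul_zero]
    rw [hsplit, key (p:ℕ) (q:ℕ)]
  -- det B = 1
  have hdetB : B.det = 1 := by
    have htri : B.BlockTriangular OrderDual.toDual := by
      intro i j hij
      have : (i:ℕ) < (j:ℕ) := hij
      rw [hB]
      simp only
      rw [if_neg (by omega)]
    rw [Matrix.det_of_lowerTriangular B htri]
    refine Finset.prod_eq_one fun i _ => ?_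
    rw [hB]
    simp
  -- det C = 1/m!
  have hdetC : C.det = 1 / (Nat.factorial m : ℚ) := by
    rw [Matrix.det_succ_column_zero]
    rw [Finset.sum_eq_single (Fin.last n)]
    · have h1 : C (Fin.last n) 0 = (-1:ℚ)^n / (Nat.factorial m : ℚ) := by
        simp only [hC]
        norm_num [Fin.last]
        rfl
      have h2 : C.submatrix (Fin.last n).succAbove Fin.succ = 1 := by
        ext a b
        rw [Matrix.submatrix_apply, Fin.succAbove_last, hC]
        simp only
        have hb1 : ((b.succ : Fin m) : ℕ) = (b:ℕ) + 1 := rfl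
        have hca : ((Fin.castSucc a : Fin m) : ℕ) = (a:ℕ) := rfl
        rw [hb1, hca, if_neg (Nat.succ_ne_zero _)]
        by_cases hab : a = b
        · subst hab
          rw [if_pos rfl, Matrix.one_apply_eq]
        · rw [if_neg (by simpa [Fin.ext_iff] using fun h => hab (Fin.ext (by omega))),
            Matrix.one_apply_ne' (by simpa [eq_comm] using hab)]
      rw [h1, h2, Matrix.det_one, mul_one]
      have hlast : ((Fin.last n : Fin m) : ℕ) = n := rfl
      rw [hlast, ← mul_div_assoc, ← pow_add, ← two_mul, pow_mul]
      norm_num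
    · intro i _ hi
      have hn1 : (i:ℕ) < n := by
        have := i.isLt
        rcases Nat.lt_or_ge (i:ℕ) n with h | h
        · exact h
        · exact absurd (Fin.ext (by simp [Fin.last]; omega)) hi
      have hn : 1 ≤ n := by omega
      have hzrow : C.submatrix i.succAbove Fin.succ ⟨n-1, by omega⟩ = 0 := by
        funext b
        rw [Matrix.submatrix_apply]
        set a : Fin n := ⟨n-1, by omega⟩ with ha
        have hsa : i.succAbove a = Fin.last n := by
          have : i ≤ Fin.castSucc a := by
            rw [Fin.le_iff_val_le_val]
            simp [ha, Fin.castSucc]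
            omega
          rw [Fin.succAbove_of_le_castSucc _ _ this]
          exact Fin.ext (by simp [ha, Fin.last]; omega)
        rw [hsa, hC]
        simp only
        have hb1 : ((b.succ : Fin m) : ℕ) = (b:ℕ) + 1 := rfl
        have hlast : ((Fin.last n : Fin m) : ℕ) = n := rfl
        rw [hb1, hlast, if_neg (Nat.succ_ne_zero _), if_neg (by have := b.isLt; omega)]
        rfl
      rw [Matrix.det_eq_zero_of_row_eq_zero ⟨n-1, by omega⟩ (fun j => congrFun hzrow j)]
      ring
    · intro h
      exact absurd (Finset.mem_univ _) h
  calc Matrix.det Y = B.det * Y.det := by rw [hdetB, one_mul]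
    _ = (B * Y).det := (Matrix.det_mul B Y).symm
    _ = C.det := by rw [hBY]
    _ = 1 / (Nat.factorial m : ℚ) := hdetC
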